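/- Let X₁, …, Xₙ be identically distributed nonnegative integrable random variables (not necessarily independent), let p₁, …, pₙ ≥ 0 with Σpⱼ = 1, and let A be a nonnegative random variable independent of (X₁,…,Xₙ). Then E[log₂(1 + A/(1 + Σⱼ pⱼ Xⱼ))] ≤ E[log₂(1 + A/(1 + X₁))]. -/

import Mathlib

open MeasureTheory ProbabilityTheory Real Set


lemma hasDeriv_aux (a : ℝ) (ha : 0 ≤ a) {x : ℝ} (hx : -1 < x) :
    HasDerivAt (fun x => Real.log (1+a+x) - Real.log (1+x))
      ((1+a+x)⁻¹ - (1+x)⁻¹) x := by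
  have h1 : (1+a+x) ≠ 0 := by nlinarith
  have h2 : (1+x) ≠ 0 := by nlinarith
  have := (((hasDerivAt_id x).const_add (1+a)).log h1).sub
    (((hasDerivAt_id x).const_add 1).log h2)
  simpa [one_div, Pi.sub_def] using this

lemma convex_aux (a : ℝ) (ha : 0 ≤ a) :
    ConvexOn ℝ (Set.Ioi (-1:ℝ)) (fun x => Real.log (1+a+x) - Real.log (1+x)) := by
  have hD : Convex ℝ (Set.Ioi (-1:ℝ)) := convex_Ioi _
  have hint : interior (Set.Ioi (-1:ℝ)) = Set.Ioi (-1:ℝ) := interior_Ioi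
  set g := fun x => Real.log (1+a+x) - Real.log (1+x) with hg
  have hder : ∀ x ∈ Set.Ioi (-1:ℝ), HasDerivAt g ((1+a+x)⁻¹ - (1+x)⁻¹) x := by
    intro x hx; exact hasDeriv_aux a ha hx
  have hderiv_eq : ∀ x ∈ Set.Ioi (-1:ℝ), deriv g x = (1+a+x)⁻¹ - (1+x)⁻¹ := by
    intro x hx; exact (hder x hx).deriv
  have hder2 : ∀ x ∈ Set.Ioi (-1:ℝ), HasDerivAt (deriv g)
      (-1/(1+a+x)^2 - -1/(1+x)^2) x := by
    intro x hx
    have h1 : (1+a+x) ≠ 0 := by simp only [Set.mem_Ioi] at hx; nlinarith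
    have h2 : (1+x) ≠ 0 := by simp only [Set.mem_Ioi] at hx; nlinarith
    have : HasDerivAt (fun x => (1+a+x)⁻¹ - (1+x)⁻¹)
        (-1/(1+a+x)^2 - -1/(1+x)^2) x := by
      have := (((hasDerivAt_id x).const_add (1+a)).inv h1).sub
        (((hasDerivAt_id x).const_add 1).inv h2)
      simpa [Pi.sub_def, Pi.inv_def] using this
    refine this.congr_of_eventuallyEq ?_
    filter_upwards [IsOpen.mem_nhds isOpen_Ioi hx] with y hy
    exact hderiv_eq y hy
  apply convexOn_of_deriv2_nonneg hD
  · exact fun x hx => ((hder x hx).continuousAt.continuousWithinAt)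
  · rw [hint]; exact fun x hx => ((hder x hx).differentiableAt.differentiableWithinAt)
  · rw [hint]; exact fun x hx => ((hder2 x hx).differentiableAt.differentiableWithinAt)
  · rw [hint]; intro x hx
    have hx' : -1 < x := hx
    rw [Function.iterate_succ, Function.iterate_one, Function.comp_apply]
    rw [(hder2 x hx).deriv]
    have h2 : (0:ℝ) < 1+x := by linarith
    have h1 : (1+x) ≤ 1+a+x := by linarith
    have h3 : ((1+a+x)^2)⁻¹ ≤ ((1+x)^2)⁻¹ :=
      inv_anti₀ (by positivity) (by nlinarith)
    have h4 : (0:ℝ) < (1+x)^2 := by positivity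
    have h5 : (0:ℝ) < (1+a+x)^2 := by nlinarith
    rw [div_eq_mul_inv, div_eq_mul_inv]
    nlinarith [h3]


lemma convex_logb (a : ℝ) (ha : 0 ≤ a) :
    ConvexOn ℝ (Set.Ici (0:ℝ)) (fun x => Real.logb 2 (1 + a/(1+x))) := by
  have h := (((convex_aux a ha).subset
      (fun x hx => lt_of_lt_of_le (by norm_num) hx) (convex_Ici 0)).smul
      (c := (Real.log 2)⁻¹) (by positivity))
  refine h.congr ?_
  intro x hx
  have hx' : (0:ℝ) ≤ x := hx
  have h1 : (0:ℝ) < 1 + x := by linarith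
  have h2 : (0:ℝ) < 1 + a + x := by linarith
  have he : 1 + a/(1+x) = (1+a+x)/(1+x) := by field_simp; ring
  show (Real.log 2)⁻¹ • (Real.log (1+a+x) - Real.log (1+x)) = Real.logb 2 (1 + a/(1+x))
  rw [he, Real.logb, Real.log_div h2.ne' h1.ne']
  simp only [smul_eq_mul]
  ring

lemma phi_nonneg {a x : ℝ} (ha : 0 ≤ a) (hx : 0 ≤ x) :
    0 ≤ Real.logb 2 (1 + a/(1+x)) :=
  Real.logb_nonneg (by norm_num) (by
    have : 0 ≤ a/(1+x) := by positivity
    linarith)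

lemma phi_le {a x : ℝ} (ha : 0 ≤ a) (hx : 0 ≤ x) :
    Real.logb 2 (1 + a/(1+x)) ≤ Real.logb 2 (1 + a) := by
  apply Real.logb_le_logb_of_le (by norm_num)
  · have : 0 ≤ a/(1+x) := by positivity
    linarith
  · have := div_le_self ha (by linarith : (1:ℝ) ≤ 1 + x)
    linarith

lemma logbA_le {a x : ℝ} (ha : 0 ≤ a) (hx : 0 ≤ x) :
    Real.logb 2 (1 + a) ≤ Real.logb 2 (1 + a/(1+x)) + Real.logb 2 (1 + x) := by
  have h1 : (0:ℝ) < 1 + x := by linarith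
  have h2 : (0:ℝ) < 1 + a/(1+x) := by
    have : 0 ≤ a/(1+x) := by positivity
    linarith
  have hprod : (1 + a/(1+x)) * (1+x) = 1 + x + a := by
    rw [add_mul, div_mul_cancel₀ _ h1.ne']; ring
  rw [← Real.logb_mul h2.ne' h1.ne']
  apply Real.logb_le_logb_of_le (by norm_num) (by linarith)
  rw [hprod]; linarith

lemma int_logb_one_add {Ω : Type*} [MeasurableSpace Ω] (P : Measure Ω)
    {Y : Ω → ℝ} (hm : Measurable Y) (h0 : ∀ ω, 0 ≤ Y ω) (hi : Integrable Y P) :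
    Integrable (fun ω => Real.logb 2 (1 + Y ω)) P := by
  have hmeas : Measurable fun ω => Real.logb 2 (1 + Y ω) := by
    have : (fun ω => Real.logb 2 (1 + Y ω))
        = fun ω => Real.log (1 + Y ω) / Real.log 2 := rfl
    rw [this]
    exact ((measurable_const.add hm).log).div_const _
  refine (hi.div_const (Real.log 2)).mono hmeas.aestronglyMeasurable
    (Filter.Eventually.of_forall fun ω => ?_)
  have hnn : 0 ≤ Real.logb 2 (1 + Y ω) :=
    Real.logb_nonneg (by norm_num) (by linarith [h0 ω])
  have hle : Real.log (1 + Y ω) ≤ Y ω := by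
    have := Real.log_le_sub_one_of_pos (by linarith [h0 ω] : (0:ℝ) < 1 + Y ω)
    linarith
  have hlog2 : (0:ℝ) < Real.log 2 := Real.log_pos (by norm_num)
  rw [Real.norm_eq_abs, Real.norm_eq_abs, abs_of_nonneg hnn,
    abs_of_nonneg (div_nonneg (h0 ω) hlog2.le)]
  rw [Real.logb]
  gcongr

/-- Let `X₁, …, Xₙ` be identically distributed nonnegative integrable random variables
(not necessarily independent), `p₁, …, pₙ ≥ 0` with `Σ pⱼ = 1`, and `A` a nonnegative
random variable independent of `(X₁, …, Xₙ)`.  Then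
`E[log₂(1 + A/(1 + Σⱼ pⱼ Xⱼ))] ≤ E[log₂(1 + A/(1 + X₁))]`. -/
theorem stmt_2 {Ω : Type*} [MeasurableSpace Ω] (P : Measure Ω) [IsProbabilityMeasure P]
    (n : ℕ) (hn : 0 < n) (X : Fin n → Ω → ℝ)
    (hXmeas : ∀ j, Measurable (X j))
    (hXnonneg : ∀ j ω, 0 ≤ X j ω)
    (hXint : ∀ j, Integrable (X j) P)
    (hident : ∀ j, IdentDistrib (X j) (X ⟨0, hn⟩) P P)
    (p : Fin n → ℝ) (hp : ∀ j, 0 ≤ p j) (hpsum : ∑ j, p j = 1)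
    (A : Ω → ℝ) (hAmeas : Measurable A) (hAnonneg : ∀ ω, 0 ≤ A ω)
    (hindep : IndepFun A (fun ω => fun j => X j ω) P) :
    ∫ ω, Real.logb 2 (1 + A ω / (1 + ∑ j, p j * X j ω)) ∂P
      ≤ ∫ ω, Real.logb 2 (1 + A ω / (1 + X ⟨0, hn⟩ ω)) ∂P := by
  have hSmeas : Measurable (fun ω => ∑ j, p j * X j ω) :=
    Finset.measurable_sum _ fun j _ => (hXmeas j).const_mul _
  have hSnonneg : ∀ ω, 0 ≤ ∑ j, p j * X j ω :=
    fun ω => Finset.sum_nonneg fun j _ => mul_nonneg (hp j) (hXnonneg j ω)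
  have hSint : Integrable (fun ω => ∑ j, p j * X j ω) P :=
    integrable_finset_sum _ fun j _ => ((hXint j).const_mul _)
  have hTmeas : ∀ j, Measurable (fun ω => Real.logb 2 (1 + A ω / (1 + X j ω))) := by
    intro j
    exact ((measurable_const.add
      (hAmeas.div (measurable_const.add (hXmeas j)))).log).div_const _
  have hLmeas : Measurable (fun ω => Real.logb 2 (1 + A ω / (1 + ∑ j, p j * X j ω))) :=
    ((measurable_const.add (hAmeas.div (measurable_const.add hSmeas))).log).div_const _
  have hTnonneg : ∀ j ω, 0 ≤ Real.logb 2 (1 + A ω / (1 + X j ω)) :=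
    fun j ω => phi_nonneg (hAnonneg ω) (hXnonneg j ω)
  have hLnonneg : ∀ ω, 0 ≤ Real.logb 2 (1 + A ω / (1 + ∑ j, p j * X j ω)) :=
    fun ω => phi_nonneg (hAnonneg ω) (hSnonneg ω)
  -- pointwise Jensen
  have hkey : ∀ ω, Real.logb 2 (1 + A ω / (1 + ∑ j, p j * X j ω))
      ≤ ∑ j, p j * Real.logb 2 (1 + A ω / (1 + X j ω)) := by
    intro ω
    have := (convex_logb (A ω) (hAnonneg ω)).map_sum_le (t := Finset.univ)
      (w := p) (p := fun j => X j ω)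
      (fun i _ => hp i) hpsum (fun i _ => (hXnonneg i ω))
    simpa [smul_eq_mul] using this
  -- equal laws
  have hident2 : ∀ j, IdentDistrib (fun ω => Real.logb 2 (1 + A ω / (1 + X j ω)))
      (fun ω => Real.logb 2 (1 + A ω / (1 + X ⟨0, hn⟩ ω))) P P := by
    intro j
    have hφ : Measurable (fun q : ℝ × ℝ => Real.logb 2 (1 + q.1 / (1 + q.2))) :=
      ((measurable_const.add
        (measurable_fst.div (measurable_const.add measurable_snd))).log).div_const _
    have hpair : IdentDistrib (fun ω => (A ω, X j ω))
        (fun ω => (A ω, X ⟨0, hn⟩ ω)) P P := by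
      have hik : IndepFun A (X j) P :=
        hindep.comp measurable_id (measurable_pi_apply j)
      have hi0 : IndepFun A (X ⟨0, hn⟩) P :=
        hindep.comp measurable_id (measurable_pi_apply _)
      refine ⟨(hAmeas.prodMk (hXmeas j)).aemeasurable,
        (hAmeas.prodMk (hXmeas _)).aemeasurable, ?_⟩
      rw [(indepFun_iff_map_prod_eq_prod_map_map hAmeas.aemeasurable
            (hXmeas j).aemeasurable).mp hik,
          (indepFun_iff_map_prod_eq_prod_map_map hAmeas.aemeasurable
            (hXmeas _).aemeasurable).mp hi0,
          (hident j).map_eq]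
    exact hpair.comp hφ
  have hint_eq : ∀ j, ∫ ω, Real.logb 2 (1 + A ω / (1 + X j ω)) ∂P
      = ∫ ω, Real.logb 2 (1 + A ω / (1 + X ⟨0, hn⟩ ω)) ∂P :=
    fun j => (hident2 j).integral_eq
  by_cases hA : Integrable (fun ω => Real.logb 2 (1 + A ω)) P
  · -- integrable case
    have hTint : ∀ j, Integrable (fun ω => Real.logb 2 (1 + A ω / (1 + X j ω))) P := by
      intro j
      refine hA.mono (hTmeas j).aestronglyMeasurable
        (Filter.Eventually.of_forall fun ω => ?_)
      rw [Real.norm_eq_abs, Real.norm_eq_abs, abs_of_nonneg (hTnonneg j ω),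
        abs_of_nonneg (Real.logb_nonneg one_lt_two (by linarith [hAnonneg ω]))]
      exact phi_le (hAnonneg ω) (hXnonneg j ω)
    calc ∫ ω, Real.logb 2 (1 + A ω / (1 + ∑ j, p j * X j ω)) ∂P
        ≤ ∫ ω, (∑ j, p j * Real.logb 2 (1 + A ω / (1 + X j ω))) ∂P :=
          integral_mono_of_nonneg (Filter.Eventually.of_forall hLnonneg)
            (integrable_finset_sum _ fun j _ => (hTint j).const_mul _)
            (Filter.Eventually.of_forall hkey)
      _ = ∑ j, ∫ ω, p j * Real.logb 2 (1 + A ω / (1 + X j ω)) ∂P :=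
          integral_finset_sum _ fun j _ => (hTint j).const_mul _
      _ = ∑ j, p j * ∫ ω, Real.logb 2 (1 + A ω / (1 + X j ω)) ∂P := by
          refine Finset.sum_congr rfl fun j _ => ?_
          exact integral_const_mul _ _
      _ = ∑ j, p j * ∫ ω, Real.logb 2 (1 + A ω / (1 + X ⟨0, hn⟩ ω)) ∂P := by
          refine Finset.sum_congr rfl fun j _ => ?_
          rw [hint_eq j]
      _ = ∫ ω, Real.logb 2 (1 + A ω / (1 + X ⟨0, hn⟩ ω)) ∂P := by
          rw [← Finset.sum_mul, hpsum, one_mul]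
  · -- non-integrable case: both sides vanish
    have hAlogmeas : Measurable (fun ω => Real.logb 2 (1 + A ω)) :=
      ((measurable_const.add hAmeas).log).div_const _
    have hnT : ¬ Integrable (fun ω => Real.logb 2 (1 + A ω / (1 + X ⟨0, hn⟩ ω))) P := by
      intro h
      apply hA
      have hlogX0 : Integrable (fun ω => Real.logb 2 (1 + X ⟨0, hn⟩ ω)) P :=
        int_logb_one_add P (hXmeas _) (hXnonneg _) (hXint _)
      refine (h.add hlogX0).mono hAlogmeas.aestronglyMeasurable
        (Filter.Eventually.of_forall fun ω => ?_)
      rw [Real.norm_eq_abs, Real.norm_eq_abs,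
        abs_of_nonneg (Real.logb_nonneg one_lt_two (by linarith [hAnonneg ω]))]
      have h2 : 0 ≤ Real.logb 2 (1 + A ω / (1 + X ⟨0, hn⟩ ω))
          + Real.logb 2 (1 + X ⟨0, hn⟩ ω) :=
        add_nonneg (hTnonneg _ ω)
          (Real.logb_nonneg one_lt_two (by linarith [hXnonneg ⟨0, hn⟩ ω]))
      simp only [Pi.add_apply]
      rw [abs_of_nonneg h2]
      exact logbA_le (hAnonneg ω) (hXnonneg ⟨0, hn⟩ ω)
    have hnL : ¬ Integrable
        (fun ω => Real.logb 2 (1 + A ω / (1 + ∑ j, p j * X j ω))) P := by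
      intro h
      apply hA
      have hlogS : Integrable (fun ω => Real.logb 2 (1 + ∑ j, p j * X j ω)) P :=
        int_logb_one_add P hSmeas hSnonneg hSint
      refine (h.add hlogS).mono hAlogmeas.aestronglyMeasurable
        (Filter.Eventually.of_forall fun ω => ?_)
      rw [Real.norm_eq_abs, Real.norm_eq_abs,
        abs_of_nonneg (Real.logb_nonneg one_lt_two (by linarith [hAnonneg ω]))]
      have h2 : 0 ≤ Real.logb 2 (1 + A ω / (1 + ∑ j, p j * X j ω))
          + Real.logb 2 (1 + ∑ j, p j * X j ω) :=
        add_nonneg (hLnonneg ω)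
          (Real.logb_nonneg one_lt_two (by linarith [hSnonneg ω]))
      simp only [Pi.add_apply]
      rw [abs_of_nonneg h2]
      exact logbA_le (hAnonneg ω) (hSnonneg ω)
    rw [integral_undef hnL, integral_undef hnT]
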